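/- arXiv:2503.00886 — 3 statements merged into one kernel-verified Lean document; each statement's English description precedes it below -/
import Mathlib

section
/- Let m be a multisegment and [a,b] a segment; set m₁ = m_{[a,b]} and m_{p+1} = m_p − Ds(m_p). If Δ ∈ Ds(m_p) and Δ′ ∈ Ds(m_{p′}) with p < p′, then Δ′ is not properly contained in Δ. -/
namespace Multiseg

/-- A segment `[a,b]` on a fixed cuspidal line, encoded by its endpoints. -/
abbrev Seg := ℤ × ℤ

/-- A multiset of pairs is a multisegment when each pair is a genuine segment. -/
def IsMS (m : Multiset Seg) : Prop := ∀ Δ ∈ m, Δ.1 ≤ Δ.2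

/-- `Δ ≺ Δ'` : the segment `Δ` precedes `Δ'`. -/
def Prec (Δ Δ' : Seg) : Prop := Δ.1 < Δ'.1 ∧ Δ.2 < Δ'.2 ∧ Δ'.1 ≤ Δ.2 + 1

instance : DecidableRel Prec := fun _ _ => by unfold Prec; infer_instance

/-- `Δ ⊆ Δ'` as segments. -/
def SSub (Δ Δ' : Seg) : Prop := Δ'.1 ≤ Δ.1 ∧ Δ.2 ≤ Δ'.2

/-- `m[i]`, the segments of `m` starting at `i`. -/
def startAt (m : Multiset Seg) (i : ℤ) : Multiset Seg := m.filter fun Δ => Δ.1 = i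

/-- `m⟨i⟩`, the segments of `m` ending at `i`. -/
def endAt (m : Multiset Seg) (i : ℤ) : Multiset Seg := m.filter fun Δ => Δ.2 = i

/-- `m_{[a,b]} = {[a',b'] ∈ m : a ≤ a' ≤ b+1 ≤ b'+1}`. -/
def mRange (m : Multiset Seg) (a b : ℤ) : Multiset Seg :=
  m.filter fun Δ => a ≤ Δ.1 ∧ Δ.1 ≤ b + 1 ∧ b ≤ Δ.2

/-- Add the segment `[x,y]` to `m`, discarding it if it is void. -/
def pushSeg (m : Multiset Seg) (x y : ℤ) : Multiset Seg :=
  if x ≤ y then m + {(x, y)} else m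

def msetMax (s : Multiset ℤ) : Option ℤ :=
  if h : s = 0 then none else some (s.toFinset.max' (Multiset.toFinset_nonempty.mpr h))

def msetMin (s : Multiset ℤ) : Option ℤ :=
  if h : s = 0 then none else some (s.toFinset.min' (Multiset.toFinset_nonempty.mpr h))

/-- The longest segment of `m[i]`, if any. -/
def longStart (m : Multiset Seg) (i : ℤ) : Option Seg :=
  (msetMax ((startAt m i).map Prod.snd)).map fun y => (i, y)

/-- The shortest segment of `m[i]`, if any. -/
def shortStart (m : Multiset Seg) (i : ℤ) : Option Seg :=
  (msetMin ((startAt m i).map Prod.snd)).map fun y => (i, y)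

/-- The longest segment of `m⟨i⟩`, if any. -/
def longEnd (m : Multiset Seg) (i : ℤ) : Option Seg :=
  (msetMin ((endAt m i).map Prod.fst)).map fun x => (x, i)

/-- The shortest segment of `m⟨i⟩`, if any. -/
def shortEnd (m : Multiset Seg) (i : ℤ) : Option Seg :=
  (msetMax ((endAt m i).map Prod.fst)).map fun x => (x, i)

/-- One removal step of the `tds(·,c)` process: remove the longest segment `Δ''`
of `m[c+1]` and the longest segment `Δ'` of `m[c]` with `Δ' ≺ Δ''`. -/
def tdsStep (m : Multiset Seg) (c : ℤ) : Option (Multiset Seg) :=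
  match longStart m (c + 1) with
  | none => none
  | some Δ'' =>
    match msetMax (((startAt m c).filter fun Δ => Prec Δ Δ'').map Prod.snd) with
    | none => none
    | some y => some ((m.erase (c, y)).erase Δ'')

def tdsIterF (c : ℤ) : ℕ → Multiset Seg → Multiset Seg
  | 0, m => m
  | n + 1, m =>
    match tdsStep m c with
    | none => m
    | some m' => tdsIterF c n m'

/-- Iterate the `tds(·,c)` process until it terminates. -/
def tdsIter (c : ℤ) (m : Multiset Seg) : Multiset Seg := tdsIterF c m.card m

/-- The `ρ`-derivative algorithm `𝒟_{[a]}`; the value `none` codes `∞`. -/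
def Drho (a : ℤ) (m : Multiset Seg) : Option (Multiset Seg) :=
  (shortStart (tdsIter a m) a).map fun Δ => pushSeg (m.erase Δ) (a + 1) Δ.2

/-- `ε_{[a]}(m)`, the number of segments starting at `a` left after the
`tds(·,a)` process terminates. -/
def epsA (a : ℤ) (m : Multiset Seg) : ℕ := (startAt (tdsIter a m) a).card

/-- The next element of an upward sequence after `p`. -/
def usNext (n : Multiset Seg) (p : Seg) : Option Seg :=
  match msetMin ((n.filter fun Δ => Prec p Δ).map Prod.fst) with
  | none => none
  | some aj =>
    (msetMax ((((n.filter fun Δ => Prec p Δ).filter fun Δ => Δ.1 = aj)).map Prod.snd)).map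
      fun y => (aj, y)

def usAux (n : Multiset Seg) : ℕ → Seg → List Seg
  | 0, _ => []
  | fuel + 1, p =>
    match usNext n p with
    | none => []
    | some Δ => Δ :: usAux n fuel Δ

/-- The upward sequence `Us(n)` of maximally linked segments of `n`. -/
def usList (n : Multiset Seg) : List Seg :=
  match msetMin (n.map Prod.fst) with
  | none => []
  | some a1 =>
    match longStart n a1 with
    | none => []
    | some Δ1 => Δ1 :: usAux n n.card Δ1

/-- The decomposition of a multisegment into successive upward sequences. -/
def usDecomp : ℕ → Multiset Seg → List (List Seg)
  | 0, _ => []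
  | fuel + 1, n =>
    if n = 0 then [] else usList n :: usDecomp fuel (n - (usList n : Multiset Seg))

/-- `[x,y] ⊆ [u,v]` (with the void interval contained in anything). -/
def intSubB (x y u v : ℤ) : Bool := decide (y < x) || (decide (u ≤ x) && decide (y ≤ v))

/-- Find, in a row of an upward-sequence decomposition, the first segment `Δ`
whose removable free section contains `[s(Δ), top]`. -/
def findRowD : List Seg → ℤ → Option Seg
  | [], _ => none
  | [Δ], top => if intSubB Δ.1 top Δ.1 Δ.2 then some Δ else none
  | Δ :: Δ' :: rest, top =>
    if intSubB Δ.1 top Δ.1 (Δ'.1 - 2) then some Δ else findRowD (Δ' :: rest) top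

/-- The selection step of the Langlands derivative algorithm, scanning the rows
downwards from the last one; it records each selected segment together with the
start of its truncation. -/
def selAuxD (rows : List (List Seg)) : ℕ → ℤ → List (Seg × ℤ)
  | 0, _ => []
  | n + 1, top =>
    match findRowD (rows.getD n []) top with
    | some Δ => (Δ, top + 1) :: selAuxD rows n (Δ.1 - 1)
    | none => selAuxD rows n top

/-- The Langlands derivative algorithm `𝒟^Lang_{[a,b]}`; `none` codes `∞`. -/
def DLang (a b : ℤ) (m : Multiset Seg) : Option (Multiset Seg) :=
  let m1 := mRange m a b
  let rows := usDecomp m1.card m1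
  let sel := selAuxD rows rows.length b
  match sel.getLast? with
  | none => none
  | some (Δl, _) =>
    if Δl.1 = a then
      some (sel.foldl (fun acc p => pushSeg (acc.erase p.1) p.2 p.1.2) m)
    else none

/-- One removal step of the `tus(·,c)` process. -/
def tusStep (n : Multiset Seg) (c : ℤ) : Option (Multiset Seg) :=
  match shortStart n c with
  | none => none
  | some Δ' =>
    match msetMin (((startAt n (c + 1)).filter fun Δ => Prec Δ' Δ).map Prod.snd) with
    | none => none
    | some y => some ((n.erase Δ').erase (c + 1, y))

def tusIterF (c : ℤ) : ℕ → Multiset Seg → Multiset Seg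
  | 0, n => n
  | k + 1, n =>
    match tusStep n c with
    | none => n
    | some n' => tusIterF c k n'

/-- Iterate the `tus(·,c)` process until it terminates. -/
def tusIter (c : ℤ) (n : Multiset Seg) : Multiset Seg := tusIterF c n.card n

/-- The `ρ`-integral algorithm `ℐ_{[a]}` (always defined). -/
def Irho (a : ℤ) (n : Multiset Seg) : Multiset Seg :=
  match longStart (tusIter a n) (a + 1) with
  | none => n + {(a, a)}
  | some Δ => pushSeg (n.erase Δ) a Δ.2

/-- The next element of a downward sequence after `p`. -/
def dsNext (n : Multiset Seg) (p : Seg) : Option Seg :=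
  match msetMax ((n.filter fun Δ => Prec Δ p).map Prod.fst) with
  | none => none
  | some aq => shortStart n aq

def dsAux (n : Multiset Seg) : ℕ → Seg → List Seg
  | 0, _ => []
  | k + 1, p =>
    match dsNext n p with
    | none => []
    | some Δ => Δ :: dsAux n k Δ

/-- The downward sequence `Ds(n)` of minimal linked segments with the largest
starting. -/
def dsList (n : Multiset Seg) : List Seg :=
  match msetMax (n.map Prod.fst) with
  | none => []
  | some a1 =>
    match shortStart n a1 with
    | none => []
    | some Δ1 => Δ1 :: dsAux n n.card Δ1

/-- The decomposition of a multisegment into successive downward sequences. -/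
def dsDecomp : ℕ → Multiset Seg → List (List Seg)
  | 0, _ => []
  | k + 1, n =>
    if n = 0 then [] else dsList n :: dsDecomp k (n - (dsList n : Multiset Seg))

/-- Find, in a row of a downward-sequence decomposition, the segment whose set
of addable free points contains `pt`. -/
def findRowI (a : ℤ) : List Seg → ℤ → Option Seg
  | [], _ => none
  | [Δ], pt => if decide (a ≤ pt) && decide (pt ≤ Δ.1 - 1) then some Δ else none
  | Δ :: Δ' :: rest, pt =>
    if decide (Δ'.1 + 1 ≤ pt) && decide (pt ≤ Δ.1 - 1) then some Δ
    else findRowI a (Δ' :: rest) pt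

/-- The selection step of the Langlands integral algorithm; it records each
selected segment together with the start of its extension. -/
def selAuxI (a : ℤ) (rows : List (List Seg)) : ℕ → ℤ → List (Seg × ℤ)
  | 0, _ => []
  | n + 1, pt =>
    match findRowI a (rows.getD n []) pt with
    | some Δ => (Δ, pt) :: selAuxI a rows n Δ.1
    | none => selAuxI a rows n pt

/-- The Langlands integral algorithm `ℐ^Lang_{[a,b]}`. -/
def ILang (a b : ℤ) (m : Multiset Seg) : Multiset Seg :=
  let m1 := mRange m a b
  let rows := dsDecomp m1.card m1
  let sel := selAuxI a rows rows.length a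
  let base := sel.foldl (fun acc p => pushSeg (acc.erase p.1) p.2 p.1.2) m
  match sel.getLast? with
  | none => pushSeg base a b
  | some (Δl, _) => pushSeg base Δl.1 b

/-- `m` is in good range for `[a,b]`. -/
def GoodRange (m : Multiset Seg) (a b : ℤ) : Prop := mRange m a b = m

/-- `Θ`, the Gelfand–Kazhdan involution on multisegments. -/
def Theta (m : Multiset Seg) : Multiset Seg := m.map fun Δ => (-Δ.2, -Δ.1)

/-- The exotic duality `𝔻_r`. -/
def Dual (r : ℤ) (m : Multiset Seg) : Multiset Seg :=
  m.map fun Δ => (-r + Δ.2 + 1, Δ.1 - 1)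

/-- `𝔻_r^{[a,b]}`. -/
def DualAB (r a b : ℤ) (m : Multiset Seg) : Multiset Seg := Dual r m + {(b - r + 1, b)}

/-- The left Langlands derivative algorithm `𝒟^{Lang,L}_{[a,b]}`. -/
def DLangL (a b : ℤ) (m : Multiset Seg) : Option (Multiset Seg) :=
  (DLang (-b) (-a) (Theta m)).map Theta

/-- The left `ρ`-derivative algorithm `𝒟^{Lang,L}_{[a]}`. -/
def DrhoL (a : ℤ) (m : Multiset Seg) : Option (Multiset Seg) :=
  (Drho (-a) (Theta m)).map Theta

/-- The next segment chosen by the MW algorithm after `p`. -/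
def mwNext (m : Multiset Seg) (p : Seg) : Option Seg :=
  (msetMax (((endAt m (p.2 - 1)).filter fun Δ => Prec Δ p).map Prod.fst)).map
    fun x => (x, p.2 - 1)

def mwAux (m : Multiset Seg) : ℕ → Seg → List Seg
  | 0, _ => []
  | k + 1, p =>
    match mwNext m p with
    | none => []
    | some Δ => Δ :: mwAux m k Δ

/-- The ordered segments participating in the MW algorithm for `m`. -/
def mwList (m : Multiset Seg) : List Seg :=
  match msetMax (m.map Prod.snd) with
  | none => []
  | some b0 =>
    match shortEnd m b0 with
    | none => []
    | some Δ0 => Δ0 :: mwAux m m.card Δ0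

/-- `𝒟^MW(m)`. -/
def DMW (m : Multiset Seg) : Multiset Seg :=
  (mwList m).foldl (fun acc Δ => pushSeg (acc.erase Δ) Δ.1 (Δ.2 - 1)) m

/-- The first segment `Δ(m)` produced by the MW algorithm for `m`. -/
def mwFirstSeg (m : Multiset Seg) : Option Seg :=
  match (mwList m).head?, (mwList m).getLast? with
  | some Δ0, some Δk => some (Δk.1, Δ0.2)
  | _, _ => none

/-- The total relative length of a multisegment. -/
def totalLen (m : Multiset Seg) : ℕ := (m.map fun Δ => (Δ.2 - Δ.1 + 1).toNat).sum

def sharpAux : ℕ → Multiset Seg → Multiset Seg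
  | 0, _ => 0
  | k + 1, m =>
    if m = 0 then 0
    else
      match mwFirstSeg m with
      | none => 0
      | some Δ => Δ ::ₘ sharpAux k (DMW m)

/-- The Mœglin–Waldspurger involution `m^#`. -/
def msharp (m : Multiset Seg) : Multiset Seg := sharpAux (totalLen m) m

/-- `ε^MW_{[a,c]}(m)`, the multiplicity of `[a,c]` in `m^#`. -/
def epsMW (a c : ℤ) (m : Multiset Seg) : ℕ := (msharp m).count (a, c)

/-- `m_i`: remove from `m` the participants of the first `i` runs of the MW
algorithm. -/
def mwStage (m : Multiset Seg) : ℕ → Multiset Seg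
  | 0 => m
  | i + 1 => mwStage m i - (mwList (DMW^[i] m) : Multiset Seg)

/-- `MW_k(m)`: all segments ending at `k` participating in the first `r` runs
of the MW algorithm. -/
def MWkSet (m : Multiset Seg) (r : ℕ) (k : ℤ) : Multiset Seg :=
  ∑ i ∈ Finset.range r, (mwList (DMW^[i] m) : Multiset Seg).filter fun Δ => Δ.2 = k

def upNbrAux (m : Multiset Seg) : ℕ → Seg → Option (List Seg)
  | 0, p => some [p]
  | k + 1, p =>
    match msetMin (((endAt m (p.2 + 1)).filter fun Δ => Prec p Δ).map Prod.fst) with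
    | none => none
    | some x => (upNbrAux m k (x, p.2 + 1)).map fun l => p :: l

/-- The removal upward sequence of maximal linked segments in neighbors on `m`
ranging from `a-1` to `b` (if it exists). -/
def upSeqNbr (m : Multiset Seg) (a b : ℤ) : Option (List Seg) :=
  match longEnd m (a - 1) with
  | none => none
  | some Δ => upNbrAux m (b - (a - 1)).toNat Δ

def zelRemF (a b : ℤ) : ℕ → Multiset Seg → Multiset Seg
  | 0, m => m
  | k + 1, m =>
    match upSeqNbr m a b with
    | none => m
    | some l => zelRemF a b k (m - (l : Multiset Seg))

/-- Repeatedly remove removal upward sequences of maximal linked segments in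
neighbors ranging from `a-1` to `b`, until none exists. -/
def zelRem (a b : ℤ) (m : Multiset Seg) : Multiset Seg := zelRemF a b m.card m

def zelRemCountF (a b : ℤ) : ℕ → Multiset Seg → ℕ
  | 0, _ => 0
  | k + 1, m =>
    match upSeqNbr m a b with
    | none => 0
    | some l => zelRemCountF a b k (m - (l : Multiset Seg)) + 1

/-- The number of removal upward sequences of maximal linked segments in
neighbors ranging from `a-1` to `b` successively removed from `m`. -/
def zelRemCount (a b : ℤ) (m : Multiset Seg) : ℕ := zelRemCountF a b m.card m

def downNbrAux (m : Multiset Seg) : ℕ → Seg → Option (List Seg)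
  | 0, p => some [p]
  | k + 1, p =>
    match msetMax (((endAt m (p.2 - 1)).filter fun Δ => Prec Δ p).map Prod.fst) with
    | none => none
    | some x => (downNbrAux m k (x, p.2 - 1)).map fun l => p :: l

/-- The Zelevinsky derivative algorithm `𝒟^Zel_{[a,b]}`; `none` codes `∞`. -/
def DZel (a b : ℤ) (m : Multiset Seg) : Option (Multiset Seg) :=
  match shortEnd (zelRem a b m) b with
  | none => none
  | some Δb =>
    match downNbrAux (zelRem a b m) (b - a).toNat Δb with
    | none => none
    | some l => some (l.foldl (fun acc Δ => pushSeg (acc.erase Δ) Δ.1 (Δ.2 - 1)) m)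

/-- The downward sequence of minimal linked segments in neighbors on `m`
ranging from `b` to `a-1` (if it exists). -/
def downSeqNbr (m : Multiset Seg) (a b : ℤ) : Option (List Seg) :=
  match shortEnd m b with
  | none => none
  | some Δ => downNbrAux m (b - (a - 1)).toNat Δ

def izRemF (a b : ℤ) : ℕ → Multiset Seg → Multiset Seg
  | 0, m => m
  | k + 1, m =>
    match downSeqNbr m a b with
    | none => m
    | some l => izRemF a b k (m - (l : Multiset Seg))

/-- Repeatedly remove downward sequences of minimal linked segments in
neighbors ranging from `b` to `a-1`, until none exists. -/
def izRem (a b : ℤ) (m : Multiset Seg) : Multiset Seg := izRemF a b m.card m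

def extNext (m : Multiset Seg) (p : Seg) : Option Seg :=
  (msetMin (((endAt m (p.2 + 1)).filter fun Δ => Prec p Δ).map Prod.fst)).map
    fun x => (x, p.2 + 1)

def extAux (m : Multiset Seg) : ℕ → Option Seg → List (Option Seg)
  | 0, _ => []
  | k + 1, p =>
    let cur := p.bind (extNext m)
    cur :: extAux m k cur

/-- The (possibly void) segments `Δ̃_{a-1}, …, Δ̃_{b-1}` participating in the
extension process of the Zelevinsky integral algorithm on `m`. -/
def extList (m : Multiset Seg) (a b : ℤ) : List (Option Seg) :=
  longEnd m (a - 1) :: extAux m (b - a).toNat (longEnd m (a - 1))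

def applyExt : Multiset Seg → ℤ → List (Option Seg) → Multiset Seg
  | acc, _, [] => acc
  | acc, i, some Δ :: rest => applyExt (pushSeg (acc.erase Δ) Δ.1 (Δ.2 + 1)) (i + 1) rest
  | acc, i, none :: rest => applyExt (acc + {(i + 1, i + 1)}) (i + 1) rest

/-- The Zelevinsky integral algorithm `ℐ^Zel_{[a,b]}`. -/
def IZel (a b : ℤ) (m : Multiset Seg) : Multiset Seg :=
  applyExt m (a - 1) (extList (izRem a b m) a b)

/-- `Δ̃⁺` for a possibly void `Δ̃` at position `i` (for the void segment at
position `i` this is the singleton `[i+1,i+1]`). -/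
def plusAt (i : ℤ) : Option Seg → Seg
  | some Δ => (Δ.1, Δ.2 + 1)
  | none => (i + 1, i + 1)

def plusList : ℤ → List (Option Seg) → List Seg
  | _, [] => []
  | i, o :: rest => plusAt i o :: plusList (i + 1) rest

/-- `n₁` and `n₂` are linked by mapping: there is an injective map `f : n₁ → n₂`
with `Δ ≺ f(Δ)` for all `Δ ∈ n₁`. -/
def LinkedByMapping (n₁ n₂ : Multiset Seg) : Prop :=
  ∃ n₂' ≤ n₂, Multiset.Rel Prec n₁ n₂'

def startsSorted (n : Multiset Seg) : List ℤ := (n.map Prod.fst).sort (· ≤ ·)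

/-- `n₁' < n₁` for multisegments of segments ending at a common point, compared
via their sorted lists of starting points. -/
def MSLtStarts (n₁' n₁ : Multiset Seg) : Prop :=
  startsSorted n₁' ≠ startsSorted n₁ ∧
    List.Forall₂ (· ≤ ·) (startsSorted n₁) (startsSorted n₁')

/-- `n₁ ⊆ m⟨k-1⟩` and `n₂ ⊆ m⟨k⟩` are minimally linked in `m`. -/
def MinLinked (m : Multiset Seg) (k : ℤ) (n₁ n₂ : Multiset Seg) : Prop :=
  n₁ ≤ endAt m (k - 1) ∧ n₂ ≤ endAt m k ∧ LinkedByMapping n₁ n₂ ∧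
    (∀ n₁' ≤ endAt m (k - 1), LinkedByMapping n₁' n₂ → n₁'.card ≤ n₁.card) ∧
    (∀ n₁' ≤ endAt m (k - 1), n₁'.card = n₁.card → MSLtStarts n₁' n₁ →
      ¬LinkedByMapping n₁' n₂)

/-- The non-free sections of a row of an upward-sequence decomposition. -/
def nfRow : List Seg → Multiset Seg
  | [] => 0
  | [_] => 0
  | Δ :: Δ' :: rest => pushSeg (nfRow (Δ' :: rest)) (Δ'.1 - 1) Δ.2

/-- `𝔡(m)`, the sum of all non-free sections. -/
def frakd (m : Multiset Seg) : Multiset Seg :=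
  (usDecomp m.card m).foldl (fun acc row => acc + nfRow row) 0

def DrhoPow (t : ℤ) : ℕ → Multiset Seg → Option (Multiset Seg)
  | 0, m => some m
  | k + 1, m => (Drho t m).bind (DrhoPow t k)

/-- `(𝒟_{[a+n-1]})^{ε_{a+n-1}} ∘ ⋯ ∘ (𝒟_{[a]})^{ε_a}(m)` where at each stage `t`
the exponent is `ε_t = ε_{[t]}` of the current multisegment; `none` codes that
some derivative in the composition is `∞`. -/
def hdComp : ℕ → ℤ → Multiset Seg → Option (Multiset Seg)
  | 0, _, m => some m
  | k + 1, t, m =>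
    match DrhoPow t (epsA t m) m with
    | none => none
    | some m' => hdComp k (t + 1) m'


/-! ### Auxiliary lemmas for stmt14 -/

lemma msetMax_eq_some' {s : Multiset ℤ} {y : ℤ} (h : msetMax s = some y) :
    y ∈ s ∧ ∀ z ∈ s, z ≤ y := by
  unfold msetMax at h
  split at h
  · simp at h
  · simp only [Option.some.injEq] at h
    subst h
    refine ⟨?_, fun z hz => Finset.le_max' _ _ (Multiset.mem_toFinset.mpr hz)⟩
    simpa using Finset.max'_mem s.toFinset _

lemma msetMax_eq_none' {s : Multiset ℤ} (h : msetMax s = none) : s = 0 := by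
  unfold msetMax at h
  split at h
  · assumption
  · simp at h

lemma msetMin_eq_some' {s : Multiset ℤ} {y : ℤ} (h : msetMin s = some y) :
    y ∈ s ∧ ∀ z ∈ s, y ≤ z := by
  unfold msetMin at h
  split at h
  · simp at h
  · simp only [Option.some.injEq] at h
    subst h
    refine ⟨?_, fun z hz => Finset.min'_le _ _ (Multiset.mem_toFinset.mpr hz)⟩
    simpa using Finset.min'_mem s.toFinset _

lemma msetMin_eq_none' {s : Multiset ℤ} (h : msetMin s = none) : s = 0 := by
  unfold msetMin at h
  split at h
  · assumption
  · simp at h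

/-- `Δ` is a shortest segment of `n` at its start. -/
def ShortAt (n : Multiset Seg) (Δ : Seg) : Prop :=
  Δ ∈ n ∧ ∀ Φ ∈ n, Φ.1 = Δ.1 → Δ.2 ≤ Φ.2

/-- `Δ` is a valid next element after `p` in a downward sequence of `n`. -/
def StepDS (n : Multiset Seg) (p Δ : Seg) : Prop :=
  Δ.1 < p.1 ∧ Δ.2 < p.2 ∧ ∀ Φ ∈ n, Prec Φ p → Φ.1 ≤ Δ.1

/-- The tail of a downward sequence of `n` after `p` is well-formed. -/
def GoodTail (n : Multiset Seg) : Seg → List Seg → Prop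
  | p, [] => ∀ Φ ∈ n, ¬ Prec Φ p
  | p, Δ :: rest => ShortAt n Δ ∧ StepDS n p Δ ∧ GoodTail n Δ rest

lemma shortStart_eq_some' {n : Multiset Seg} {i : ℤ} {Δ : Seg}
    (h : shortStart n i = some Δ) : Δ.1 = i ∧ ShortAt n Δ := by
  unfold shortStart at h
  cases hmin : msetMin ((startAt n i).map Prod.snd) with
  | none => rw [hmin] at h; simp at h
  | some y =>
    rw [hmin] at h
    simp only [Option.map_some, Option.some.injEq] at h
    obtain ⟨hy, hbound⟩ := msetMin_eq_some' hmin
    obtain ⟨Φ, hΦ, hΦ2⟩ := Multiset.mem_map.mp hy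
    have hΦ' := Multiset.mem_filter.mp hΦ
    subst h
    refine ⟨rfl, ?_, ?_⟩
    · have : Φ = (i, y) := by
        cases Φ
        simp only [Prod.mk.injEq]
        exact ⟨hΦ'.2, hΦ2⟩
      rw [← this]; exact hΦ'.1
    · intro Ψ hΨ hΨ1
      exact hbound _ (Multiset.mem_map_of_mem _
        (Multiset.mem_filter.mpr ⟨hΨ, hΨ1⟩))

lemma shortStart_isSome' {n : Multiset Seg} {i : ℤ} {Φ : Seg}
    (hΦ : Φ ∈ n) (h1 : Φ.1 = i) : ∃ Δ, shortStart n i = some Δ := by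
  unfold shortStart
  cases h : msetMin ((startAt n i).map Prod.snd) with
  | none =>
    exfalso
    have h0 := msetMin_eq_none' h
    have : Φ.2 ∈ (startAt n i).map Prod.snd :=
      Multiset.mem_map_of_mem _ (Multiset.mem_filter.mpr ⟨hΦ, h1⟩)
    rw [h0] at this
    simp at this
  | some y => exact ⟨(i, y), rfl⟩

lemma dsNext_none' {n : Multiset Seg} {p : Seg} (h : dsNext n p = none) :
    ∀ Φ ∈ n, ¬ Prec Φ p := by
  unfold dsNext at h
  cases hmax : msetMax ((n.filter fun Δ => Prec Δ p).map Prod.fst) with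
  | none =>
    intro Φ hΦ hprec
    have h0 := msetMax_eq_none' hmax
    have : Φ.1 ∈ (n.filter fun Δ => Prec Δ p).map Prod.fst :=
      Multiset.mem_map_of_mem _ (Multiset.mem_filter.mpr ⟨hΦ, hprec⟩)
    rw [h0] at this
    simp at this
  | some aq =>
    rw [hmax] at h
    obtain ⟨hy, _⟩ := msetMax_eq_some' hmax
    obtain ⟨Ψ, hΨ, hΨ1⟩ := Multiset.mem_map.mp hy
    have hΨ' := Multiset.mem_filter.mp hΨ
    obtain ⟨Δ, hΔ⟩ := shortStart_isSome' hΨ'.1 hΨ1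
    have h' : shortStart n aq = none := h
    rw [hΔ] at h'
    simp at h'

lemma dsNext_some' {n : Multiset Seg} {p Δ : Seg} (h : dsNext n p = some Δ) :
    ShortAt n Δ ∧ StepDS n p Δ := by
  unfold dsNext at h
  cases hmax : msetMax ((n.filter fun Δ => Prec Δ p).map Prod.fst) with
  | none => rw [hmax] at h; simp at h
  | some aq =>
    rw [hmax] at h
    obtain ⟨hy, hbound⟩ := msetMax_eq_some' hmax
    obtain ⟨Ψ, hΨ, hΨ1⟩ := Multiset.mem_map.mp hy
    have hΨ' := Multiset.mem_filter.mp hΨ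
    obtain ⟨hΔ1, hshort⟩ := shortStart_eq_some' h
    refine ⟨hshort, ?_, ?_, ?_⟩
    · rw [hΔ1, ← hΨ1]; exact hΨ'.2.1
    · have : Δ.2 ≤ Ψ.2 := hshort.2 Ψ hΨ'.1 (by rw [hΨ1, hΔ1])
      exact lt_of_le_of_lt this hΨ'.2.2.1
    · intro Φ hΦ hprec
      rw [hΔ1]
      exact hbound _ (Multiset.mem_map_of_mem _
        (Multiset.mem_filter.mpr ⟨hΦ, hprec⟩))

lemma dsAux_good (n : Multiset Seg) :
    ∀ (k : ℕ) (p : Seg), (n.filter fun Δ => Δ.1 < p.1).card ≤ k →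
      GoodTail n p (dsAux n k p) := by
  intro k
  induction k with
  | zero =>
    intro p hk
    show GoodTail n p []
    intro Φ hΦ hprec
    have h0 : (n.filter fun Δ => Δ.1 < p.1) = 0 := by
      rwa [Nat.le_zero, Multiset.card_eq_zero] at hk
    have : Φ ∈ (n.filter fun Δ => Δ.1 < p.1) :=
      Multiset.mem_filter.mpr ⟨hΦ, hprec.1⟩
    rw [h0] at this
    simp at this
  | succ k ih =>
    intro p hk
    show GoodTail n p (dsAux n (k+1) p)
    unfold dsAux
    cases h : dsNext n p with
    | none =>
      show GoodTail n p []
      exact dsNext_none' h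
    | some Δ =>
      obtain ⟨hshort, hstep⟩ := dsNext_some' h
      refine ⟨hshort, hstep, ih Δ ?_⟩
      have hmono : (n.filter fun Ψ => Ψ.1 < Δ.1) ≤ (n.filter fun Ψ => Ψ.1 < p.1) :=
        Multiset.monotone_filter_right n (fun Ψ hΨ => lt_trans hΨ hstep.1)
      have hne : (n.filter fun Ψ => Ψ.1 < Δ.1) ≠ (n.filter fun Ψ => Ψ.1 < p.1) := by
        intro heq
        have : Δ ∈ n.filter fun Ψ => Ψ.1 < p.1 :=
          Multiset.mem_filter.mpr ⟨hshort.1, hstep.1⟩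
        rw [← heq] at this
        exact absurd (Multiset.mem_filter.mp this).2 (lt_irrefl _)
      have hlt := Multiset.card_lt_card (lt_of_le_of_ne hmono hne)
      omega

lemma goodTail_bounds {n : Multiset Seg} :
    ∀ (L : List Seg) (p : Seg), GoodTail n p L → ∀ Δ ∈ L, Δ.1 < p.1 ∧ Δ.2 < p.2 := by
  intro L
  induction L with
  | nil => intro p _ Δ hΔ; simp at hΔ
  | cons Δ₂ rest ih =>
    rintro p ⟨hs, hstep, htail⟩ Δ hΔ
    rcases List.mem_cons.mp hΔ with rfl | hΔ
    · exact ⟨hstep.1, hstep.2.1⟩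
    · obtain ⟨h1, h2⟩ := ih Δ₂ htail Δ hΔ
      exact ⟨lt_trans h1 hstep.1, lt_trans h2 hstep.2.1⟩

lemma goodTail_mem {n : Multiset Seg} :
    ∀ (L : List Seg) (p : Seg), GoodTail n p L → ∀ Δ ∈ L, Δ ∈ n := by
  intro L
  induction L with
  | nil => intro p _ Δ hΔ; simp at hΔ
  | cons Δ₂ rest ih =>
    rintro p ⟨hs, hstep, htail⟩ Δ hΔ
    rcases List.mem_cons.mp hΔ with rfl | hΔ
    · exact hs.1
    · exact ih Δ₂ htail Δ hΔ

lemma key_ds (b : ℤ) {n : Multiset Seg} (hb : ∀ Φ ∈ n, Φ.1 ≤ b + 1 ∧ b ≤ Φ.2) :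
    ∀ (L : List Seg) (p : Seg), ShortAt n p → GoodTail n p L →
      ∀ Δ ∈ p :: L, ∀ Δ' ∈ n, Δ'.1 ≤ p.1 → SSub Δ' Δ → Δ' = Δ := by
  intro L
  induction L with
  | nil =>
    intro p hp _ Δ hΔ Δ' hΔ' hle hsub
    have : Δ = p := by simpa using hΔ
    subst this
    have h1 : Δ'.1 = Δ.1 := le_antisymm hle hsub.1
    have h2 : Δ'.2 = Δ.2 := le_antisymm hsub.2 (hp.2 Δ' hΔ' h1)
    exact Prod.ext h1 h2
  | cons Δ₂ rest ih =>
    rintro p hp ⟨hs2, hstep, htail⟩ Δ hΔ Δ' hΔ' hle hsub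
    rcases eq_or_lt_of_le hle with heq | hlt
    · have hy : p.2 ≤ Δ'.2 := hp.2 Δ' hΔ' heq
      rcases List.mem_cons.mp hΔ with rfl | hin
      · exact Prod.ext (le_antisymm hle hsub.1) (le_antisymm hsub.2 hy)
      · have hbd := goodTail_bounds (Δ₂ :: rest) p ⟨hs2, hstep, htail⟩ Δ hin
        exact absurd (lt_of_le_of_lt hsub.2 hbd.2) (not_lt.mpr hy)
    · have hin : Δ ∈ Δ₂ :: rest := by
        rcases List.mem_cons.mp hΔ with rfl | hin
        · exact absurd (lt_of_le_of_lt hsub.1 hlt) (lt_irrefl _)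
        · exact hin
      have hbd := goodTail_bounds (Δ₂ :: rest) p ⟨hs2, hstep, htail⟩ Δ hin
      have hprec : Prec Δ' p := by
        refine ⟨hlt, lt_of_le_of_lt hsub.2 hbd.2, ?_⟩
        have h1 := (hb p hp.1).1
        have h2 := (hb Δ' hΔ').2
        omega
      have hle2 : Δ'.1 ≤ Δ₂.1 := hstep.2.2 Δ' hΔ' hprec
      exact ih Δ₂ hs2 htail Δ hin Δ' hΔ' hle2 hsub

lemma dsList_good (n : Multiset Seg) :
    dsList n = [] ∨ ∃ Δ₁ rest, dsList n = Δ₁ :: rest ∧ ShortAt n Δ₁ ∧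
      (∀ Φ ∈ n, Φ.1 ≤ Δ₁.1) ∧ GoodTail n Δ₁ rest := by
  cases h1 : msetMax (n.map Prod.fst) with
  | none => left; simp [dsList, h1]
  | some a1 =>
    obtain ⟨ha1, hmax⟩ := msetMax_eq_some' h1
    obtain ⟨Φ, hΦ, hΦ1⟩ := Multiset.mem_map.mp ha1
    obtain ⟨Δ₁, hΔ₁⟩ := shortStart_isSome' hΦ hΦ1
    have hlist : dsList n = Δ₁ :: dsAux n n.card Δ₁ := by
      simp [dsList, h1, hΔ₁]
    rw [hlist]
    obtain ⟨hΔeq, hshort⟩ := shortStart_eq_some' hΔ₁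
    refine Or.inr ⟨Δ₁, _, rfl, hshort, ?_, ?_⟩
    · intro Ψ hΨ
      rw [hΔeq]
      exact hmax _ (Multiset.mem_map_of_mem _ hΨ)
    · exact dsAux_good n n.card Δ₁ (Multiset.card_le_card (Multiset.filter_le _ _))

lemma dsList_mem {n : Multiset Seg} {Δ : Seg} (h : Δ ∈ dsList n) : Δ ∈ n := by
  rcases dsList_good n with h0 | ⟨Δ₁, rest, heq, hs, _, htail⟩
  · rw [h0] at h; simp at h
  · rw [heq] at h
    rcases List.mem_cons.mp h with rfl | hin
    · exact hs.1
    · exact goodTail_mem rest Δ₁ htail Δ hin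

lemma dsList_no_proper_sub (b : ℤ) {n : Multiset Seg}
    (hb : ∀ Φ ∈ n, Φ.1 ≤ b + 1 ∧ b ≤ Φ.2)
    {Δ Δ' : Seg} (hΔ : Δ ∈ dsList n) (hΔ' : Δ' ∈ n) (hsub : SSub Δ' Δ) :
    Δ' = Δ := by
  rcases dsList_good n with h0 | ⟨Δ₁, rest, heq, hs, hmaxs, htail⟩
  · rw [h0] at hΔ; simp at hΔ
  · rw [heq] at hΔ
    exact key_ds b hb rest Δ₁ hs htail Δ hΔ Δ' hΔ' (hmaxs Δ' hΔ') hsub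

/-- One stage of the downward-sequence decomposition. -/
def dsStepM (n : Multiset Seg) : Multiset Seg := n - (dsList n : Multiset Seg)

lemma dsStepM_le (n : Multiset Seg) : dsStepM n ≤ n := Multiset.sub_le_self _ _

lemma dsStage_le (n : Multiset Seg) : ∀ k, dsStepM^[k] n ≤ n := by
  intro k
  induction k generalizing n with
  | zero => simp
  | succ k ih =>
    rw [Function.iterate_succ_apply]
    exact le_trans (ih (dsStepM n)) (dsStepM_le n)

lemma dsStage_anti (n : Multiset Seg) {i j : ℕ} (h : i ≤ j) :
    dsStepM^[j] n ≤ dsStepM^[i] n := by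
  obtain ⟨k, rfl⟩ := Nat.exists_eq_add_of_le h
  rw [Nat.add_comm, Function.iterate_add_apply]
  exact dsStage_le _ k

lemma dsDecomp_row_eq : ∀ (fuel : ℕ) (n : Multiset Seg) (j : ℕ),
    j < (dsDecomp fuel n).length →
    (dsDecomp fuel n).getD j [] = dsList (dsStepM^[j] n) := by
  intro fuel
  induction fuel with
  | zero => intro n j h; simp [dsDecomp] at h
  | succ k ih =>
    intro n j h
    by_cases hn : n = 0
    · rw [show dsDecomp (k+1) n = [] by simp [dsDecomp, hn]] at h
      simp at h
    · have hrow : dsDecomp (k+1) n =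
          dsList n :: dsDecomp k (n - (dsList n : Multiset Seg)) := by
        simp [dsDecomp, hn]
      rw [hrow] at h ⊢
      cases j with
      | zero => simp
      | succ j =>
        simp only [List.getD_cons_succ]
        rw [Function.iterate_succ_apply]
        exact ih _ j (by simpa using h)

/-- in the decomposition of `m_{[a,b]}` into downward sequences,
a segment of a later row is never properly contained in a segment of an
earlier row. -/
theorem stmt14 (m : Multiset Seg) (hm : IsMS m) (a b : ℤ) (hab : a ≤ b)
    (p p' : ℕ) (hpp : p < p')
    (hlt : p' < (dsDecomp (mRange m a b).card (mRange m a b)).length)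
    (Δ Δ' : Seg)
    (hΔ : Δ ∈ (dsDecomp (mRange m a b).card (mRange m a b)).getD p [])
    (hΔ' : Δ' ∈ (dsDecomp (mRange m a b).card (mRange m a b)).getD p' []) :
    ¬(SSub Δ' Δ ∧ Δ' ≠ Δ) := by
  rintro ⟨hsub, hne⟩
  set N := mRange m a b with hN
  have hb : ∀ Φ ∈ N, Φ.1 ≤ b + 1 ∧ b ≤ Φ.2 := by
    intro Φ hΦ
    have h := Multiset.mem_filter.mp hΦ
    exact ⟨h.2.2.1, h.2.2.2⟩
  have hrow := dsDecomp_row_eq N.card N p (lt_trans hpp hlt)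
  have hrow' := dsDecomp_row_eq N.card N p' hlt
  rw [hrow] at hΔ
  rw [hrow'] at hΔ'
  have hΔ'n : Δ' ∈ dsStepM^[p'] N := dsList_mem hΔ'
  have hΔ'p : Δ' ∈ dsStepM^[p] N :=
    Multiset.mem_of_le (dsStage_anti N (le_of_lt hpp)) hΔ'n
  have hbp : ∀ Φ ∈ dsStepM^[p] N, Φ.1 ≤ b + 1 ∧ b ≤ Φ.2 :=
    fun Φ hΦ => hb Φ (Multiset.mem_of_le (dsStage_le N p) hΦ)
  exact hne (dsList_no_proper_sub b hbp hΔ hΔ'p hsub)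

end Multiseg
end

section
/- Let m be a multisegment and [a,b] a segment; set m₁ = m_{[a,b]} and m_{p+1} = m_p − Ds(m_p). Let a ≤ c ≤ b and p < p′, and suppose both Ds(m_p) and Ds(m_{p′}) contain a (necessarily unique) segment starting at c, say Δ and Δ′ respectively. Then Δ is contained in Δ′. -/
namespace Multiseg

lemma shortStart_spec {n : Multiset Seg} {c : ℤ} {Δ : Seg}
    (h : shortStart n c = some Δ) :
    Δ ∈ n ∧ Δ.1 = c ∧ ∀ Δ'' ∈ n, Δ''.1 = c → Δ.2 ≤ Δ''.2 := by
  unfold shortStart msetMin at h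
  set s := (startAt n c).map Prod.snd with hs
  by_cases h0 : s = 0
  · simp [h0] at h
  · simp only [h0, dite_false, Option.map_some] at h
    obtain ⟨hΔ1, hΔ2⟩ : Δ.1 = c ∧ Δ.2 = s.toFinset.min' (Multiset.toFinset_nonempty.mpr h0) := by
      cases h; exact ⟨rfl, rfl⟩
    have hmem : Δ.2 ∈ s := by
      rw [hΔ2]; exact Multiset.mem_toFinset.mp (Finset.min'_mem _ _)
    rw [hs, Multiset.mem_map] at hmem
    obtain ⟨Δ₀, hΔ₀, hΔ₀2⟩ := hmem
    rw [startAt, Multiset.mem_filter] at hΔ₀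
    have hΔ₀eq : Δ₀ = Δ := by
      apply Prod.ext
      · rw [hΔ₀.2, hΔ1]
      · exact hΔ₀2
    refine ⟨hΔ₀eq ▸ hΔ₀.1, hΔ1, fun Δ'' hΔ'' hΔ''1 => ?_⟩
    rw [hΔ2]
    apply Finset.min'_le
    rw [Multiset.mem_toFinset, hs, Multiset.mem_map]
    exact ⟨Δ'', Multiset.mem_filter.mpr ⟨hΔ'', hΔ''1⟩, rfl⟩

lemma dsAux_shortStart {n : Multiset Seg} {k : ℕ} {p Δ : Seg}
    (h : Δ ∈ dsAux n k p) : shortStart n Δ.1 = some Δ := by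
  induction k generalizing p with
  | zero => simp [dsAux] at h
  | succ k ih =>
    rw [dsAux] at h
    cases hnx : dsNext n p with
    | none => rw [hnx] at h; simp at h
    | some Δ₀ =>
      rw [hnx] at h
      rcases List.mem_cons.mp h with h | h
      · subst h
        unfold dsNext at hnx
        cases hm : msetMax ((Multiset.filter (fun Δ => Prec Δ p) n).map Prod.fst) with
        | none => rw [hm] at hnx; simp at hnx
        | some aq =>
          rw [hm] at hnx
          have := (shortStart_spec hnx).2.1
          rw [this]; exact hnx
      · exact ih h

lemma dsList_shortStart {n : Multiset Seg} {Δ : Seg}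
    (h : Δ ∈ dsList n) : shortStart n Δ.1 = some Δ := by
  unfold dsList at h
  cases hmx : msetMax (n.map Prod.fst) with
  | none => rw [hmx] at h; simp at h
  | some a1 =>
    rw [hmx] at h
    dsimp only at h
    cases hss : shortStart n a1 with
    | none => rw [hss] at h; simp at h
    | some Δ1 =>
      rw [hss] at h
      rcases List.mem_cons.mp h with h | h
      · subst h
        have := (shortStart_spec hss).2.1
        rw [this]; exact hss
      · exact dsAux_shortStart h

lemma dsList_min {n : Multiset Seg} {Δ Δ'' : Seg} (h : Δ ∈ dsList n)
    (h'' : Δ'' ∈ n) (heq : Δ''.1 = Δ.1) : Δ.2 ≤ Δ''.2 :=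
  (shortStart_spec (dsList_shortStart h)).2.2 Δ'' h'' heq

lemma dsDecomp_row_mem {k : ℕ} {n : Multiset Seg} {q : ℕ} {Δ : Seg}
    (h : Δ ∈ (dsDecomp k n).getD q []) : Δ ∈ n := by
  induction k generalizing n q with
  | zero => simp [dsDecomp] at h
  | succ k ih =>
    rw [dsDecomp] at h
    by_cases h0 : n = 0
    · simp [h0] at h
    · rw [if_neg h0] at h
      cases q with
      | zero => exact dsList_mem h
      | succ q =>
        have := ih (n := n - (dsList n : Multiset Seg)) (q := q) h
        exact Multiset.mem_of_le tsub_le_self this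

lemma dsDecomp_key {k : ℕ} {n : Multiset Seg} {p p' : ℕ} (hpp : p < p')
    {Δ Δ' : Seg}
    (hΔ : Δ ∈ (dsDecomp k n).getD p [])
    (hΔ' : Δ' ∈ (dsDecomp k n).getD p' [])
    (heq : Δ'.1 = Δ.1) : Δ.2 ≤ Δ'.2 := by
  induction k generalizing n p p' with
  | zero => simp [dsDecomp] at hΔ
  | succ k ih =>
    rw [dsDecomp] at hΔ hΔ'
    by_cases h0 : n = 0
    · simp [h0] at hΔ
    · rw [if_neg h0] at hΔ hΔ'
      cases p with
      | zero =>
        obtain ⟨p'', rfl⟩ : ∃ p'', p' = p'' + 1 :=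
          ⟨p' - 1, (Nat.succ_pred_eq_of_pos hpp).symm⟩
        have hΔ'n : Δ' ∈ n :=
          Multiset.mem_of_le tsub_le_self (dsDecomp_row_mem hΔ')
        exact dsList_min hΔ hΔ'n heq
      | succ q =>
        obtain ⟨p'', rfl⟩ : ∃ p'', p' = p'' + 1 :=
          ⟨p' - 1, (Nat.succ_pred_eq_of_pos (Nat.lt_of_le_of_lt (Nat.zero_le _) hpp)).symm⟩
        exact ih (Nat.succ_lt_succ_iff.mp hpp) hΔ hΔ'

/-- in the decomposition of `m_{[a,b]}` into downward sequences,
if rows `p < p'` both contain a segment starting at `c`, then the one in the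
earlier row is contained in the one in the later row. -/
theorem stmt15 (m : Multiset Seg) (hm : IsMS m) (a b : ℤ) (hab : a ≤ b)
    (p p' : ℕ) (hpp : p < p')
    (hlt : p' < (dsDecomp (mRange m a b).card (mRange m a b)).length)
    (c : ℤ) (hc1 : a ≤ c) (hc2 : c ≤ b)
    (Δ Δ' : Seg)
    (hΔ : Δ ∈ (dsDecomp (mRange m a b).card (mRange m a b)).getD p [])
    (hΔ' : Δ' ∈ (dsDecomp (mRange m a b).card (mRange m a b)).getD p' [])
    (hs : Δ.1 = c) (hs' : Δ'.1 = c) :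
    SSub Δ Δ' := by
  constructor
  · rw [hs, hs']
  · exact dsDecomp_key hpp hΔ hΔ' (by rw [hs, hs'])

end Multiseg
end

section
/- Let m be a multisegment and k ∈ ℤ. Let p_k and p_k′ be multisegments all of whose segments end at k, and p_{k+1} and p_{k+1}′ multisegments all of whose segments end at k+1, with |p_k| ≤ |p_{k+1}| and |p_k′| ≤ |p_{k+1}′|. If p_k and p_{k+1} are minimally linked in m + p_k + p_{k+1}, and p_k′ and p_{k+1}′ are minimally linked in m + p_k′ + p_{k+1}′, then p_k + p_k′ and p_{k+1} + p_{k+1}′ are minimally linked in m + p_k + p_{k+1} + p_k′ + p_{k+1}′. -/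
namespace Multiseg

section StmtAux
open Multiset

/-- `g X t` : the number of elements of `X` that are `≥ t`. -/
def gcnt (X : Multiset ℤ) (t : ℤ) : ℕ := (X.filter (t ≤ ·)).card

lemma gcnt_add (X Y : Multiset ℤ) (t : ℤ) : gcnt (X + Y) t = gcnt X t + gcnt Y t := by
  simp [gcnt, Multiset.filter_add]

lemma gcnt_mono {X Y : Multiset ℤ} (h : X ≤ Y) (t : ℤ) : gcnt X t ≤ gcnt Y t :=
  card_le_card (filter_le_filter _ h)

lemma gcnt_cons (a : ℤ) (X : Multiset ℤ) (t : ℤ) :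
    gcnt (a ::ₘ X) t = gcnt X t + (if t ≤ a then 1 else 0) := by
  simp only [gcnt, Multiset.filter_cons]
  split <;> simp [add_comm]

lemma gcnt_le_card (X : Multiset ℤ) (t : ℤ) : gcnt X t ≤ X.card :=
  card_le_card (filter_le _ _)

lemma gcnt_eq_card {X : Multiset ℤ} {t : ℤ} (h : ∀ x ∈ X, t ≤ x) : gcnt X t = X.card := by
  rw [gcnt, Multiset.filter_eq_self.mpr h]

lemma gcnt_anti (X : Multiset ℤ) {t s : ℤ} (h : t ≤ s) : gcnt X s ≤ gcnt X t :=
  card_le_card (monotone_filter_right _ (fun b hb => le_trans h hb))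

lemma card_le_of_gcnt {X Y : Multiset ℤ} (h : ∀ t, gcnt X t ≤ gcnt Y t) : X.card ≤ Y.card := by
  rcases eq_or_ne X 0 with rfl | hX
  · simp
  · have hne : X.toFinset.Nonempty := by simpa using hX
    set t := X.toFinset.min' hne with ht
    have hmin : ∀ x ∈ X, t ≤ x := fun x hx => X.toFinset.min'_le x (mem_toFinset.mpr hx)
    calc X.card = gcnt X t := (gcnt_eq_card hmin).symm
      _ ≤ gcnt Y t := h t
      _ ≤ Y.card := gcnt_le_card Y t

/-- interval count -/
lemma gcnt_split (X : Multiset ℤ) {t e : ℤ} (h : t ≤ e) :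
    gcnt X t = gcnt X e + (X.filter (fun x => t ≤ x ∧ x < e)).card := by
  have := Multiset.filter_add_filter (fun x : ℤ => e ≤ x) (fun x => t ≤ x ∧ x < e) X
  have h2 : Multiset.filter (fun x : ℤ => e ≤ x ∧ (t ≤ x ∧ x < e)) X = 0 :=
    Multiset.filter_eq_nil.mpr (by intro a _ hc; omega)
  have h3 : Multiset.filter (fun x : ℤ => e ≤ x ∨ (t ≤ x ∧ x < e)) X
      = Multiset.filter (t ≤ ·) X := Multiset.filter_congr (by intro x _; constructor <;> intro hh <;> omega)
  rw [h2, h3] at this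
  have := congrArg Multiset.card this
  simp only [Multiset.card_add, Multiset.card_zero, add_zero] at this
  simpa [gcnt] using this.symm

lemma gcnt_count (X : Multiset ℤ) (a : ℤ) : gcnt X a = gcnt X (a + 1) + X.count a := by
  rw [gcnt_split X (by omega : a ≤ a + 1)]
  congr 1
  rw [Multiset.count_eq_card_filter_eq]
  congr 1
  exact Multiset.filter_congr (by intro x _; constructor <;> intro hh <;> omega)

lemma eq_of_gcnt_eq {X Y : Multiset ℤ} (h : ∀ t, gcnt X t = gcnt Y t) : X = Y := by
  ext a
  have h1 := gcnt_count X a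
  have h2 := gcnt_count Y a
  have := h a; have := h (a + 1)
  omega

/-- numeric linking condition -/
def NLink (X Y : Multiset ℤ) : Prop := ∀ t, gcnt X t ≤ gcnt Y (t + 1)

lemma rel_to_nlink {X Y : Multiset ℤ} (h : Multiset.Rel (· < ·) X Y) : NLink X Y := by
  induction h with
  | zero => intro t; simp [gcnt]
  | @cons a b s t hab hr ih =>
      intro u
      rw [gcnt_cons, gcnt_cons]
      have := ih u
      have : (if u ≤ a then (1:ℕ) else 0) ≤ (if u + 1 ≤ b then 1 else 0) := by
        split <;> split <;> omega
      omega

lemma nlink_to_rel : ∀ (n : ℕ) (X Y : Multiset ℤ), X.card = n → NLink X Y →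
    ∃ Y' ≤ Y, Multiset.Rel (· < ·) X Y' := by
  intro n
  induction n with
  | zero =>
      intro X Y hc _
      exact ⟨0, Multiset.zero_le _, by rw [Multiset.card_eq_zero.mp hc]; exact Multiset.rel_zero_left.mpr rfl⟩
  | succ n ih =>
      intro X Y hc hL
      have hX : X ≠ 0 := by intro h; rw [h] at hc; simp at hc
      have hne : X.toFinset.Nonempty := by simpa using hX
      set x := X.toFinset.max' hne with hx
      have hxX : x ∈ X := mem_toFinset.mp (X.toFinset.max'_mem hne)
      have hmax : ∀ a ∈ X, a ≤ x := fun a ha => X.toFinset.le_max' a (mem_toFinset.mpr ha)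
      have hgx : 1 ≤ gcnt X x := by
        rw [gcnt]
        have : x ∈ X.filter (x ≤ ·) := Multiset.mem_filter.mpr ⟨hxX, le_refl x⟩
        exact Multiset.card_pos.mpr (fun h0 => by simp [h0] at this)
      have hgy : 1 ≤ gcnt Y (x + 1) := le_trans hgx (hL x)
      have hfne : (Y.filter (x + 1 ≤ ·)) ≠ 0 := by
        intro h0; rw [gcnt, h0] at hgy; simp at hgy
      have hfne' : (Y.filter (x + 1 ≤ ·)).toFinset.Nonempty := Multiset.toFinset_nonempty.mpr hfne
      set y := (Y.filter (x + 1 ≤ ·)).toFinset.min' hfne' with hy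
      have hyY : y ∈ Y.filter (x + 1 ≤ ·) := mem_toFinset.mp (Finset.min'_mem _ hfne')
      have hyY' : y ∈ Y := (Multiset.mem_filter.mp hyY).1
      have hxy : x + 1 ≤ y := (Multiset.mem_filter.mp hyY).2
      set X' := X.erase x with hX'
      set Y'' := Y.erase y with hY''
      have hXc : X = x ::ₘ X' := (Multiset.cons_erase hxX).symm
      have hYc : Y = y ::ₘ Y'' := (Multiset.cons_erase hyY').symm
      have hNL : NLink X' Y'' := by
        intro t
        by_cases ht : t ≤ x
        · have h1 : gcnt X t = gcnt X' t + 1 := by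
            rw [hXc, gcnt_cons]; simp [ht]
          have h2 : gcnt Y (t + 1) = gcnt Y'' (t + 1) + 1 := by
            have hty : t + 1 ≤ y := by omega
            rw [hYc, gcnt_cons]; simp [hty]
          have := hL t; omega
        · have : gcnt X' t = 0 := by
            rw [gcnt, Multiset.card_eq_zero]
            exact Multiset.filter_eq_nil.mpr (fun a ha => by
              have : a ∈ X := Multiset.mem_of_le (Multiset.erase_le _ _) ha
              have := hmax a this; omega)
          omega
      have hc' : X'.card = n := by
        have := Multiset.card_erase_of_mem hxX
        rw [hc] at this; simpa [hX'] using this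
      obtain ⟨Y₀, hY₀le, hY₀rel⟩ := ih X' Y'' hc' hNL
      refine ⟨y ::ₘ Y₀, ?_, ?_⟩
      · calc y ::ₘ Y₀ ≤ y ::ₘ Y'' := Multiset.cons_le_cons y hY₀le
          _ = Y := Multiset.cons_erase hyY'
      · rw [hXc]
        exact Multiset.Rel.cons (by omega) hY₀rel

lemma list_dom : ∀ (l₁ l₂ : List ℤ), l₁.Pairwise (· ≤ ·) → l₂.Pairwise (· ≤ ·) →
    l₁.length = l₂.length →
    (∀ t : ℤ, l₁.countP (fun x => decide (t ≤ x)) ≤ l₂.countP (fun x => decide (t ≤ x))) →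
    List.Forall₂ (· ≤ ·) l₁ l₂ := by
  intro l₁
  induction l₁ with
  | nil =>
      intro l₂ _ _ hl _
      have : l₂ = [] := List.length_eq_zero_iff.mp hl.symm
      simp [this]
  | cons a l₁ ih =>
      intro l₂ hs₁ hs₂ hl hcnt
      cases l₂ with
      | nil => simp at hl
      | cons b l₂ =>
          have hs₁' := (List.pairwise_cons.mp hs₁)
          have hs₂' := (List.pairwise_cons.mp hs₂)
          have hab : a ≤ b := by
            by_contra hba
            push_neg at hba
            have hall : ∀ x ∈ a :: l₁, (fun x => decide (a ≤ x)) x = true := by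
              intro x hx
              rcases List.mem_cons.mp hx with rfl | hx
              · simp
              · simpa using hs₁'.1 x hx
            have h1 : (a :: l₁).countP (fun x => decide (a ≤ x)) = l₁.length + 1 := by
              rw [List.countP_eq_length.mpr hall]; simp
            have h2 : (b :: l₂).countP (fun x => decide (a ≤ x)) ≤ l₂.length := by
              rw [List.countP_cons]
              have : ¬ (a ≤ b) := by omega
              simp [this]
              exact List.countP_le_length
            have := hcnt a
            simp at hl
            omega
          refine List.Forall₂.cons hab (ih l₂ hs₁'.2 hs₂'.2 (by simpa using hl) ?_)
          intro t
          by_cases hta : t ≤ a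
          · have h1 := hcnt t
            rw [List.countP_cons, List.countP_cons] at h1
            have htb : t ≤ b := le_trans hta hab
            simp [hta, htb] at h1
            omega
          · by_cases htb : t ≤ b
            · have : l₂.countP (fun x => decide (t ≤ x)) = l₂.length := by
                rw [List.countP_eq_length.mpr]
                intro x hx
                simp [le_trans htb (hs₂'.1 x hx)]
              rw [this]
              have := List.countP_le_length (p := fun x => decide (t ≤ x)) (l := l₁)
              simp at hl
              omega
            · have h1 := hcnt t
              rw [List.countP_cons, List.countP_cons] at h1
              simp [hta, htb] at h1
              omega

lemma gcnt_coe (l : List ℤ) (t : ℤ) : gcnt (↑l) t = l.countP (fun x => decide (t ≤ x)) := by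
  simp [gcnt, Multiset.filter_coe, List.countP_eq_length_filter]

lemma countP_mono_forall2 {l₁ l₂ : List ℤ} (h : List.Forall₂ (· ≤ ·) l₁ l₂) (t : ℤ) :
    l₁.countP (fun x => decide (t ≤ x)) ≤ l₂.countP (fun x => decide (t ≤ x)) := by
  induction h with
  | nil => simp
  | @cons a b l₁ l₂ hab htl ih =>
      rw [List.countP_cons, List.countP_cons]
      have : ((if decide (t ≤ a) = true then 1 else 0) : ℕ)
          ≤ (if decide (t ≤ b) = true then 1 else 0) := by
        by_cases h1 : t ≤ a <;> by_cases h2 : t ≤ b <;> simp [h1, h2] <;> omega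
      omega

lemma gcnt_le_of_forall2 (X Y : Multiset ℤ)
    (h : List.Forall₂ (· ≤ ·) (X.sort (· ≤ ·)) (Y.sort (· ≤ ·))) (t : ℤ) :
    gcnt X t ≤ gcnt Y t := by
  have := countP_mono_forall2 h t
  rwa [← gcnt_coe, ← gcnt_coe, Multiset.sort_eq, Multiset.sort_eq] at this

lemma forall2_of_gcnt (X Y : Multiset ℤ) (hc : X.card = Y.card)
    (h : ∀ t, gcnt X t ≤ gcnt Y t) :
    List.Forall₂ (· ≤ ·) (X.sort (· ≤ ·)) (Y.sort (· ≤ ·)) := by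
  refine list_dom _ _ (Multiset.pairwise_sort _ _) (Multiset.pairwise_sort _ _) ?_ ?_
  · rw [Multiset.length_sort, Multiset.length_sort, hc]
  · intro t
    rw [← gcnt_coe, ← gcnt_coe, Multiset.sort_eq, Multiset.sort_eq]
    exact h t

lemma linked_to_nlink {n₁ n₂ : Multiset Seg} (h : LinkedByMapping n₁ n₂) :
    NLink (n₁.map Prod.fst) (n₂.map Prod.fst) := by
  obtain ⟨n₂', hle, hrel⟩ := h
  have hr : Multiset.Rel (· < ·) (n₁.map Prod.fst) (n₂'.map Prod.fst) :=
    Multiset.rel_map.mpr (hrel.mono (fun a _ b _ hab => hab.1))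
  intro t
  exact le_trans (rel_to_nlink hr t) (gcnt_mono (Multiset.map_le_map hle) _)

lemma nlink_to_linked {k : ℤ} {n₁ n₂ : Multiset Seg}
    (h₁ : ∀ Δ ∈ n₁, Δ.2 = k) (h₂ : ∀ Δ ∈ n₂, Δ.2 = k + 1) (h₂' : ∀ Δ ∈ n₂, Δ.1 ≤ k + 1)
    (h : NLink (n₁.map Prod.fst) (n₂.map Prod.fst)) : LinkedByMapping n₁ n₂ := by
  obtain ⟨Y', hY'le, hY'rel⟩ := nlink_to_rel _ _ _ rfl h
  have hmap : (n₂.map Prod.fst).map (fun x => ((x, k + 1) : Seg)) = n₂ := by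
    rw [Multiset.map_map]
    refine Eq.trans (Multiset.map_congr rfl ?_) (Multiset.map_id _)
    intro Δ hΔ
    have h2 := h₂ Δ hΔ
    cases Δ
    simp_all
  refine ⟨Y'.map (fun x => ((x, k + 1) : Seg)), ?_, ?_⟩
  · calc Y'.map (fun x => ((x, k + 1) : Seg))
        ≤ (n₂.map Prod.fst).map (fun x => ((x, k + 1) : Seg)) := Multiset.map_le_map hY'le
      _ = n₂ := hmap
  · have h0 : Multiset.Rel (fun (Δ : Seg) (y : ℤ) => Δ.1 < y) n₁ Y' := by
      have := (Multiset.rel_map (p := (· < ·)) (f := Prod.fst) (g := id)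
        (s := n₁) (t := Y')).mp ?_
      · simpa using this
      · simpa using hY'rel
    have h0' : Multiset.Rel (fun (Δ : Seg) (y : ℤ) => Prec Δ (y, k + 1)) n₁ Y' := by
      refine h0.mono ?_
      intro Δ hΔ y hy hlt
      have hΔ2 := h₁ Δ hΔ
      have hy2 : y ≤ k + 1 := by
        have : y ∈ n₂.map Prod.fst := Multiset.mem_of_le hY'le hy
        obtain ⟨Δ', hΔ', rfl⟩ := Multiset.mem_map.mp this
        exact h₂' Δ' hΔ'
      exact ⟨hlt, by omega, by omega⟩
    have := (Multiset.rel_map (p := Prec) (f := id) (g := fun x => ((x, k + 1) : Seg))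
        (s := n₁) (t := Y')).mpr (by simpa using h0')
    simpa using this

lemma le_add_split {B Q Q' : Multiset Seg} (h : B ≤ Q + Q') :
    ∃ b₁ b₂, B = b₁ + b₂ ∧ b₁ ≤ Q ∧ b₂ ≤ Q' := by
  refine ⟨B ∩ Q, B - Q, ?_, Multiset.inter_le_right, ?_⟩
  · ext a
    simp only [Multiset.count_add, Multiset.count_inter, Multiset.count_sub]
    omega
  · rw [Multiset.sub_le_iff_le_add]
    exact h.trans (le_of_eq (add_comm _ _))

/-- L5': key tightness at points of `E`. -/
lemma key_tight (k : ℤ) (Em pk pk1 : Multiset Seg)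
    (hEm : ∀ Δ ∈ Em, Δ.2 = k)
    (hek : ∀ Δ ∈ pk, Δ.2 = k)
    (hQ2 : ∀ Δ ∈ pk1, Δ.2 = k + 1) (hQ1 : ∀ Δ ∈ pk1, Δ.1 ≤ k + 1)
    (hLink : LinkedByMapping pk pk1)
    (hMax : ∀ n₁' ≤ Em + pk, LinkedByMapping n₁' pk1 → n₁'.card ≤ pk.card)
    (hSM : ∀ n₁' ≤ Em + pk, n₁'.card = pk.card → MSLtStarts n₁' pk →
      ¬LinkedByMapping n₁' pk1) :
    ∀ e ∈ Em.map Prod.fst, gcnt (pk.map Prod.fst) e = gcnt (pk1.map Prod.fst) (e + 1) := by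
  intro e he
  set P := pk.map Prod.fst with hP
  set Q := pk1.map Prod.fst with hQ
  have hNL : NLink P Q := linked_to_nlink hLink
  -- the segment (e, k) belongs to Em
  have hseg : ((e, k) : Seg) ∈ Em := by
    obtain ⟨Δ, hΔ, hΔ1⟩ := Multiset.mem_map.mp he
    have hΔ2 := hEm Δ hΔ
    have : Δ = (e, k) := by cases Δ; simp_all
    rwa [← this]
  refine le_antisymm (hNL e) ?_
  by_contra hcon
  push_neg at hcon
  -- hcon : gcnt P e < gcnt Q (e + 1)
  by_cases hok : ∀ t, gcnt (e ::ₘ P) t ≤ gcnt Q (t + 1)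
  · -- then pk + (e,k) gives a bigger linked multiset
    have hends : ∀ Δ ∈ ((e, k) ::ₘ pk), (Δ : Seg).2 = k := by
      intro Δ hΔ
      rcases Multiset.mem_cons.mp hΔ with rfl | hΔ
      · rfl
      · exact hek Δ hΔ
    have hmfst : ((e, k) ::ₘ pk).map Prod.fst = e ::ₘ P := by simp [hP]
    have hlinked : LinkedByMapping ((e, k) ::ₘ pk) pk1 :=
      nlink_to_linked hends hQ2 hQ1 (by rw [hmfst]; exact hok)
    have hle : ((e, k) ::ₘ pk) ≤ Em + pk := by
      rw [← Multiset.singleton_add]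
      exact add_le_add (Multiset.singleton_le.mpr hseg) le_rfl
    have := hMax _ hle hlinked
    simp at this
  · push_neg at hok
    obtain ⟨t₀, ht₀⟩ := hok
    have ht0e : t₀ ≤ e := by
      by_contra h
      rw [gcnt_cons] at ht₀
      have := hNL t₀
      simp [h] at ht₀
      omega
    have htight0 : gcnt P t₀ = gcnt Q (t₀ + 1) := by
      rw [gcnt_cons] at ht₀
      have := hNL t₀
      simp [ht0e] at ht₀
      omega
    have ht0lt : t₀ < e := by
      rcases eq_or_lt_of_le ht0e with rfl | h
      · omega
      · exact h
    -- the largest tight point t' in [t₀, e]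
    have hTne : ((Finset.Icc t₀ e).filter (fun t => gcnt P t = gcnt Q (t + 1))).Nonempty :=
      ⟨t₀, by rw [Finset.mem_filter, Finset.mem_Icc]; exact ⟨⟨le_refl _, ht0e⟩, htight0⟩⟩
    set t' := ((Finset.Icc t₀ e).filter (fun t => gcnt P t = gcnt Q (t + 1))).max' hTne with ht'
    have ht'mem := Finset.max'_mem _ hTne
    rw [← ht'] at ht'mem
    rw [Finset.mem_filter, Finset.mem_Icc] at ht'mem
    obtain ⟨⟨ht'0, ht'e⟩, ht'tight⟩ := ht'mem
    have ht'lt : t' < e := by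
      rcases eq_or_lt_of_le ht'e with h | h
      · exfalso; rw [h] at ht'tight; omega
      · exact h
    have hnt : ∀ t, t' < t → t ≤ e → gcnt P t < gcnt Q (t + 1) := by
      intro t htgt hte
      rcases lt_or_eq_of_le (hNL t) with h | h
      · exact h
      · exfalso
        have hmem : t ∈ (Finset.Icc t₀ e).filter (fun t => gcnt P t = gcnt Q (t + 1)) := by
          rw [Finset.mem_filter, Finset.mem_Icc]; exact ⟨⟨by omega, hte⟩, h⟩
        have := Finset.le_max' _ t hmem
        omega
    -- find p ∈ P with t' ≤ p < e
    have hsplit := gcnt_split P (le_of_lt ht'lt)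
    have hgt : gcnt P e < gcnt P t' := by
      have h1 : gcnt Q (e + 1) ≤ gcnt Q (t' + 1) := gcnt_anti Q (by omega)
      omega
    have hDne : (P.filter (fun x => t' ≤ x ∧ x < e)) ≠ 0 := by
      intro h0; rw [h0] at hsplit; simp at hsplit; omega
    obtain ⟨p, hp⟩ := Multiset.exists_mem_of_ne_zero hDne
    rw [Multiset.mem_filter] at hp
    have hpP := hp.1
    have hpt' := hp.2.1
    have hpe := hp.2.2
    -- pk = (p,k) ::ₘ r
    have hpseg : ((p, k) : Seg) ∈ pk := by
      obtain ⟨Δ, hΔ, hΔ1⟩ := Multiset.mem_map.mp hpP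
      have hΔ2 := hek Δ hΔ
      have : Δ = (p, k) := Prod.ext hΔ1 hΔ2
      rwa [← this]
    obtain ⟨r, hr⟩ := Multiset.exists_cons_of_mem hpseg
    set R := r.map Prod.fst with hR
    have hPR : P = p ::ₘ R := by rw [hP, hr]; simp [hR]
    have hrk : ∀ Δ ∈ r, (Δ : Seg).2 = k := fun Δ hΔ => hek Δ (by rw [hr]; exact Multiset.mem_cons_of_mem hΔ)
    -- the improved multisegment pk'' = (e,k) ::ₘ r
    have hends'' : ∀ Δ ∈ ((e, k) ::ₘ r), (Δ : Seg).2 = k := by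
      intro Δ hΔ
      rcases Multiset.mem_cons.mp hΔ with rfl | hΔ
      · rfl
      · exact hrk Δ hΔ
    have hmfst'' : ((e, k) ::ₘ r).map Prod.fst = e ::ₘ R := by simp [hR]
    have hle'' : ((e, k) ::ₘ r) ≤ Em + pk := by
      rw [← Multiset.singleton_add]
      refine add_le_add (Multiset.singleton_le.mpr hseg) ?_
      rw [hr]; exact Multiset.le_cons_self _ _
    have hcard'' : ((e, k) ::ₘ r).card = pk.card := by simp [hr]
    have hNL'' : NLink (e ::ₘ R) Q := by
      intro t
      rw [gcnt_cons]
      have hPRt : gcnt P t = gcnt R t + (if t ≤ p then 1 else 0) := by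
        rw [hPR, gcnt_cons]
      by_cases htp : t ≤ p
      · have hte : t ≤ e := by omega
        have := hNL t
        simp [htp] at hPRt
        simp [hte]
        omega
      · by_cases hte : t ≤ e
        · have := hnt t (by omega) hte
          simp [htp] at hPRt
          simp [hte]
          omega
        · have := hNL t
          simp [htp] at hPRt
          simp [hte]
          omega
    have hlinked'' : LinkedByMapping ((e, k) ::ₘ r) pk1 :=
      nlink_to_linked hends'' hQ2 hQ1 (by rw [hmfst'']; exact hNL'')
    -- pk'' is bigger in starts
    have hcardR : (p ::ₘ R).card = (e ::ₘ R).card := by simp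
    have hdom : ∀ t, gcnt (p ::ₘ R) t ≤ gcnt (e ::ₘ R) t := by
      intro t
      rw [gcnt_cons, gcnt_cons]
      have : (if t ≤ p then (1:ℕ) else 0) ≤ (if t ≤ e then 1 else 0) := by
        split <;> split <;> omega
      omega
    have hMS : MSLtStarts ((e, k) ::ₘ r) pk := by
      constructor
      · intro heq
        have hcoe : ((e, k) ::ₘ r).map Prod.fst = pk.map Prod.fst := by
          have := congrArg (fun l : List ℤ => (↑l : Multiset ℤ)) heq
          simpa [startsSorted, Multiset.sort_eq] using this
        rw [hmfst'', ← hP, hPR] at hcoe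
        have h3 : gcnt (e ::ₘ R) (p + 1) = gcnt (p ::ₘ R) (p + 1) := by rw [hcoe]
        rw [gcnt_cons, gcnt_cons] at h3
        have h1 : ¬ (p + 1 ≤ p) := by omega
        have h2 : p + 1 ≤ e := by omega
        simp [h1, h2] at h3
      · have := forall2_of_gcnt (p ::ₘ R) (e ::ₘ R) hcardR hdom
        show List.Forall₂ (· ≤ ·) (startsSorted pk) (startsSorted ((e, k) ::ₘ r))
        rw [startsSorted, startsSorted, hmfst'', ← hP, hPR]
        exact this
    exact hSM _ hle'' hcard'' hMS hlinked''

/-- the combined pointwise bound -/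
lemma combined_bound (E P P' Q Q' U V : Multiset ℤ)
    (hUV : U + V ≤ E + P + P')
    (hU : NLink U Q) (hV : NLink V Q')
    (hPE : ∀ e ∈ E, gcnt P e = gcnt Q (e + 1))
    (hPE' : ∀ e ∈ E, gcnt P' e = gcnt Q' (e + 1)) :
    ∀ t, gcnt U t + gcnt V t ≤ gcnt P t + gcnt P' t := by
  intro t
  by_cases hE : ∃ e ∈ E, t ≤ e
  · have hne : (E.filter (t ≤ ·)) ≠ 0 := by
      obtain ⟨e, he, hte⟩ := hE
      intro h0
      have : e ∈ E.filter (t ≤ ·) := Multiset.mem_filter.mpr ⟨he, hte⟩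
      simp [h0] at this
    have hne' : (E.filter (t ≤ ·)).toFinset.Nonempty := Multiset.toFinset_nonempty.mpr hne
    set e := (E.filter (t ≤ ·)).toFinset.min' hne' with hedef
    have heE : e ∈ E.filter (t ≤ ·) := Multiset.mem_toFinset.mp (Finset.min'_mem _ hne')
    have heE' : e ∈ E := (Multiset.mem_filter.mp heE).1
    have hte : t ≤ e := (Multiset.mem_filter.mp heE).2
    have hmin : ∀ x ∈ E, t ≤ x → e ≤ x := fun x hx htx =>
      Finset.min'_le _ x (Multiset.mem_toFinset.mpr (Multiset.mem_filter.mpr ⟨hx, htx⟩))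
    have hsU := gcnt_split U hte
    have hsV := gcnt_split V hte
    have hsP := gcnt_split P hte
    have hsP' := gcnt_split P' hte
    -- interval counts
    have hIE : (E.filter (fun x => t ≤ x ∧ x < e)) = 0 :=
      Multiset.filter_eq_nil.mpr (fun x hx => by
        intro ⟨h1, h2⟩; have := hmin x hx h1; omega)
    have h1 : ((U + V).filter (fun x => t ≤ x ∧ x < e)).card
        ≤ ((E + P + P').filter (fun x => t ≤ x ∧ x < e)).card :=
      Multiset.card_le_card (Multiset.filter_le_filter _ hUV)
    simp only [Multiset.filter_add, Multiset.card_add, hIE, Multiset.card_zero] at h1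
    have hUe := hU e
    have hVe := hV e
    rw [← hPE e heE'] at hUe
    rw [← hPE' e heE'] at hVe
    omega
  · push_neg at hE
    have hgE : gcnt E t = 0 := by
      rw [gcnt, Multiset.card_eq_zero]
      exact Multiset.filter_eq_nil.mpr (fun x hx h => by have := hE x hx; omega)
    have h1 : gcnt (U + V) t ≤ gcnt (E + P + P') t := gcnt_mono hUV t
    rw [gcnt_add, gcnt_add, gcnt_add, hgE] at h1
    omega


end StmtAux

/-- gluing minimally linked multisegments. -/
theorem stmt18 (m : Multiset Seg) (hm : IsMS m) (k : ℤ)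
    (pk pk' pk1 pk1' : Multiset Seg)
    (hv1 : IsMS pk) (hv2 : IsMS pk') (hv3 : IsMS pk1) (hv4 : IsMS pk1')
    (hek : ∀ Δ ∈ pk, Δ.2 = k) (hek' : ∀ Δ ∈ pk', Δ.2 = k)
    (hek1 : ∀ Δ ∈ pk1, Δ.2 = k + 1) (hek1' : ∀ Δ ∈ pk1', Δ.2 = k + 1)
    (hc1 : pk.card ≤ pk1.card) (hc2 : pk'.card ≤ pk1'.card)
    (h1 : MinLinked (m + pk + pk1) (k + 1) pk pk1)
    (h2 : MinLinked (m + pk' + pk1') (k + 1) pk' pk1') :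
    MinLinked (m + pk + pk1 + pk' + pk1') (k + 1) (pk + pk') (pk1 + pk1') := by
  classical
  have hk1 : (k + 1 - 1 : ℤ) = k := by ring
  have hnil1 : Multiset.filter (fun Δ : Seg => Δ.2 = k) pk1 = 0 :=
    Multiset.filter_eq_nil.mpr (fun Δ hΔ => by have := hek1 Δ hΔ; omega)
  have hnil1' : Multiset.filter (fun Δ : Seg => Δ.2 = k) pk1' = 0 :=
    Multiset.filter_eq_nil.mpr (fun Δ hΔ => by have := hek1' Δ hΔ; omega)
  have hnil2 : Multiset.filter (fun Δ : Seg => Δ.2 = k + 1) pk = 0 :=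
    Multiset.filter_eq_nil.mpr (fun Δ hΔ => by have := hek Δ hΔ; omega)
  have hnil2' : Multiset.filter (fun Δ : Seg => Δ.2 = k + 1) pk' = 0 :=
    Multiset.filter_eq_nil.mpr (fun Δ hΔ => by have := hek' Δ hΔ; omega)
  have hEpk : endAt (m + pk + pk1) (k + 1 - 1) = endAt m k + pk := by
    rw [hk1]
    unfold endAt
    rw [Multiset.filter_add, Multiset.filter_add, Multiset.filter_eq_self.mpr hek,
      hnil1, add_zero]
  have hEpk' : endAt (m + pk' + pk1') (k + 1 - 1) = endAt m k + pk' := by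
    rw [hk1]
    unfold endAt
    rw [Multiset.filter_add, Multiset.filter_add, Multiset.filter_eq_self.mpr hek',
      hnil1', add_zero]
  have hG1 : endAt (m + pk + pk1 + pk' + pk1') (k + 1 - 1) = endAt m k + pk + pk' := by
    rw [hk1]
    unfold endAt
    rw [Multiset.filter_add, Multiset.filter_add, Multiset.filter_add, Multiset.filter_add,
      Multiset.filter_eq_self.mpr hek, Multiset.filter_eq_self.mpr hek', hnil1, hnil1',
      add_zero, add_zero]
  have hG2 : endAt (m + pk + pk1 + pk' + pk1') (k + 1) = endAt m (k + 1) + pk1 + pk1' := by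
    unfold endAt
    rw [Multiset.filter_add, Multiset.filter_add, Multiset.filter_add, Multiset.filter_add,
      Multiset.filter_eq_self.mpr hek1, Multiset.filter_eq_self.mpr hek1', hnil2, hnil2',
      add_zero, add_zero]
  have hEm : ∀ Δ ∈ endAt m k, (Δ : Seg).2 = k := by
    intro Δ hΔ
    unfold endAt at hΔ
    exact (Multiset.mem_filter.mp hΔ).2
  have hQ1 : ∀ Δ ∈ pk1, (Δ : Seg).1 ≤ k + 1 := fun Δ h => (hek1 Δ h) ▸ hv3 Δ h
  have hQ1' : ∀ Δ ∈ pk1', (Δ : Seg).1 ≤ k + 1 := fun Δ h => (hek1' Δ h) ▸ hv4 Δ h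
  obtain ⟨h1a, h1b, h1c, h1d, h1e⟩ := h1
  obtain ⟨h2a, h2b, h2c, h2d, h2e⟩ := h2
  rw [hEpk] at h1d h1e
  rw [hEpk'] at h2d h2e
  have keyP := key_tight k (endAt m k) pk pk1 hEm hek hek1 hQ1 h1c h1d h1e
  have keyP' := key_tight k (endAt m k) pk' pk1' hEm hek' hek1' hQ1' h2c h2d h2e
  unfold MinLinked
  rw [hG1, hG2]
  refine ⟨?_, ?_, ?_, ?_, ?_⟩
  · rw [Multiset.le_iff_exists_add]
    exact ⟨endAt m k, by rw [add_assoc]; exact add_comm _ _⟩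
  · rw [Multiset.le_iff_exists_add]
    exact ⟨endAt m (k + 1), by rw [add_assoc]; exact add_comm _ _⟩
  · obtain ⟨q, hq, hrq⟩ := h1c
    obtain ⟨q', hq', hrq'⟩ := h2c
    exact ⟨q + q', add_le_add hq hq', hrq.add hrq'⟩
  · intro n₁' hle hlinked
    obtain ⟨B, hB, hrel⟩ := hlinked
    obtain ⟨b₁, b₂, hBeq, hb₁, hb₂⟩ := le_add_split hB
    rw [hBeq] at hrel
    obtain ⟨u, v, hru, hrv, huv⟩ := Multiset.rel_add_right.mp hrel
    have hU : NLink (u.map Prod.fst) (pk1.map Prod.fst) := linked_to_nlink ⟨b₁, hb₁, hru⟩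
    have hV : NLink (v.map Prod.fst) (pk1'.map Prod.fst) := linked_to_nlink ⟨b₂, hb₂, hrv⟩
    have hle2 : u + v ≤ endAt m k + pk + pk' := huv ▸ hle
    have hUVle : u.map Prod.fst + v.map Prod.fst
        ≤ (endAt m k).map Prod.fst + pk.map Prod.fst + pk'.map Prod.fst := by
      have := Multiset.map_le_map (f := Prod.fst) hle2
      simpa [Multiset.map_add] using this
    have hb := combined_bound _ _ _ _ _ _ _ hUVle hU hV keyP keyP'
    have hcard := card_le_of_gcnt
      (X := u.map Prod.fst + v.map Prod.fst) (Y := pk.map Prod.fst + pk'.map Prod.fst)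
      (fun t => by rw [gcnt_add, gcnt_add]; exact hb t)
    have hcn : n₁'.card = u.card + v.card := by rw [huv, Multiset.card_add]
    simp only [Multiset.card_add, Multiset.card_map] at hcard ⊢
    omega
  · intro n₁' hle hcard hMS hlinked
    obtain ⟨B, hB, hrel⟩ := hlinked
    obtain ⟨b₁, b₂, hBeq, hb₁, hb₂⟩ := le_add_split hB
    rw [hBeq] at hrel
    obtain ⟨u, v, hru, hrv, huv⟩ := Multiset.rel_add_right.mp hrel
    have hU : NLink (u.map Prod.fst) (pk1.map Prod.fst) := linked_to_nlink ⟨b₁, hb₁, hru⟩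
    have hV : NLink (v.map Prod.fst) (pk1'.map Prod.fst) := linked_to_nlink ⟨b₂, hb₂, hrv⟩
    have hle2 : u + v ≤ endAt m k + pk + pk' := huv ▸ hle
    have hUVle : u.map Prod.fst + v.map Prod.fst
        ≤ (endAt m k).map Prod.fst + pk.map Prod.fst + pk'.map Prod.fst := by
      have := Multiset.map_le_map (f := Prod.fst) hle2
      simpa [Multiset.map_add] using this
    have hb := combined_bound _ _ _ _ _ _ _ hUVle hU hV keyP keyP'
    have hb' : ∀ t, gcnt (u.map Prod.fst + v.map Prod.fst) t
        ≤ gcnt (pk.map Prod.fst + pk'.map Prod.fst) t := by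
      intro t; rw [gcnt_add, gcnt_add]; exact hb t
    have hs1 : startsSorted (pk + pk') = (pk.map Prod.fst + pk'.map Prod.fst).sort (· ≤ ·) := by
      rw [startsSorted, Multiset.map_add]
    have hs2 : startsSorted n₁' = (u.map Prod.fst + v.map Prod.fst).sort (· ≤ ·) := by
      rw [startsSorted, huv, Multiset.map_add]
    obtain ⟨hMSne, hMSf2⟩ := hMS
    rw [hs1, hs2] at hMSf2
    have hge := gcnt_le_of_forall2 _ _ hMSf2
    have heqm : u.map Prod.fst + v.map Prod.fst = pk.map Prod.fst + pk'.map Prod.fst :=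
      eq_of_gcnt_eq (fun t => le_antisymm (hb' t) (hge t))
    apply hMSne
    rw [hs1, hs2, heqm]

end Multiseg
end
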